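/- arXiv:2007.01718 — 5 statements merged into one kernel-verified Lean document; each statement's English description precedes it below -/
import Mathlib

section
/- Let p = 10/3, r, λ > 0 and suppose there exists u ∈ H¹(ℝ³) with ∫u² = r and ∫|∇u|² + (q/4)∫φ_u u² − (3(p−2)/(2p)) λ ∫|u|^p = 0 and u ≠ 0. Then 5/(3λK) ≤ r^{2/3}, where K is the Gagliardo–Nirenberg constant for exponent 10/3. -/
open MeasureTheory

noncomputable section

abbrev E3 := EuclideanSpace ℝ (Fin 3)

/-- `∫ |∇u|²` -/
def gradInt (u : E3 → ℝ) : ℝ := ∫ x, ‖fderiv ℝ u x‖ ^ 2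

/-- The Coulomb potential `φ_u = |·|⁻¹ * u²`. -/
def phiFun (u : E3 → ℝ) (x : E3) : ℝ := ∫ y, (u y) ^ 2 / ‖x - y‖

/-- `∫ φ_u u²` -/
def phiInt (u : E3 → ℝ) : ℝ := ∫ x, phiFun u x * (u x) ^ 2

/-- `∫ |u|^p` -/
def pInt (p : ℝ) (u : E3 → ℝ) : ℝ := ∫ x, |u x| ^ p

/-- `∫ u²` -/
def massInt (u : E3 → ℝ) : ℝ := ∫ x, (u x) ^ 2

/-- Membership in `H¹(ℝ³)`. -/
def H1 (u : E3 → ℝ) : Prop :=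
  MemLp u 2 volume ∧ Differentiable ℝ u ∧ MemLp (fun x => ‖fderiv ℝ u x‖) 2 volume

/-- A differentiable function on `ℝ³` whose derivative vanishes a.e. is constant. -/
lemma const_of_ae_fderiv_zero (u : E3 → ℝ) (hdiff : Differentiable ℝ u)
    (hae : ∀ᵐ x : E3, fderiv ℝ u x = 0) : ∀ x : E3, u x = u 0 := by
  have hcont : Continuous u := hdiff.continuous
  have key : ∀ (e : E3) (t : ℝ) (y : E3), u (y + t • e) = u y := by
    intro e
    have hmeas : MeasurableSet {z : E3 × ℝ | fderiv ℝ u (z.1 + z.2 • e) = 0} := by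
      have h1 : Measurable fun z : E3 × ℝ => fderiv ℝ u (z.1 + z.2 • e) :=
        (measurable_fderiv ℝ u).comp (by fun_prop)
      exact h1 (measurableSet_singleton 0)
    have hae2 : ∀ᵐ x : E3, ∀ᵐ t : ℝ, fderiv ℝ u (x + t • e) = 0 := by
      rw [Measure.ae_ae_comm hmeas]
      refine ae_of_all _ fun t => ?_
      rw [ae_iff]
      have hset : {x : E3 | ¬ fderiv ℝ u (x + t • e) = 0}
          = (fun x : E3 => x + t • e) ⁻¹' {y : E3 | ¬ fderiv ℝ u y = 0} := rfl
      rw [hset, measure_preimage_add_right]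
      exact ae_iff.mp hae
    have hline : ∀ᵐ x : E3, ∀ t : ℝ, u (x + t • e) = u x := by
      filter_upwards [hae2] with x hx
      intro t
      set d : ℝ → ℝ := fun s => fderiv ℝ u (x + s • e) e with hd
      have hder : ∀ s : ℝ, HasDerivAt (fun s : ℝ => u (x + s • e)) (d s) s := by
        intro s
        have h1 : HasDerivAt (fun s : ℝ => x + s • e) e s := by
          simpa using ((hasDerivAt_id s).smul_const e).const_add x
        exact (hdiff (x + s • e)).hasFDerivAt.comp_hasDerivAt s h1
      have hd0 : d =ᵐ[volume] (fun _ => (0 : ℝ)) := by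
        filter_upwards [hx] with s hs
        simp [hd, hs]
      have hint : Integrable d volume := (integrable_zero _ _ _).congr hd0.symm
      have h2 := intervalIntegral.integral_eq_sub_of_hasDerivAt
        (f := fun s : ℝ => u (x + s • e)) (f' := d) (a := 0) (b := t)
        (fun s _ => hder s) hint.intervalIntegrable
      have h3 : ∫ s in (0:ℝ)..t, d s = 0 := by
        rw [intervalIntegral.integral_congr_ae (hd0.mono fun s hs _ => hs)]
        simp
      rw [h3] at h2
      simp only [zero_smul, add_zero] at h2
      linarith
    have hdense : Dense {x : E3 | ∀ t : ℝ, u (x + t • e) = u x} :=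
      Measure.dense_of_ae hline
    intro t y
    have hc1 : Continuous fun x : E3 => u (x + t • e) :=
      hcont.comp (continuous_id.add continuous_const)
    have heq := hc1.ext_on hdense hcont (fun x hx => hx t)
    exact congrFun heq y
  intro x
  set E0 : E3 := EuclideanSpace.single 0 (1:ℝ)
  set E1 : E3 := EuclideanSpace.single 1 (1:ℝ)
  set E2 : E3 := EuclideanSpace.single 2 (1:ℝ)
  have h0 : x - x 0 • E0 - x 1 • E1 - x 2 • E2 = 0 := by
    ext i
    fin_cases i <;>
      simp [E0, E1, E2, EuclideanSpace.single_apply, Fin.ext_iff]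
  calc u x = u (x - x 2 • E2 + x 2 • E2) := by rw [sub_add_cancel]
    _ = u (x - x 2 • E2) := key E2 (x 2) _
    _ = u (x - x 2 • E2 - x 1 • E1 + x 1 • E1) := by rw [sub_add_cancel]
    _ = u (x - x 2 • E2 - x 1 • E1) := key E1 (x 1) _
    _ = u (x - x 2 • E2 - x 1 • E1 - x 0 • E0 + x 0 • E0) := by rw [sub_add_cancel]
    _ = u (x - x 2 • E2 - x 1 • E1 - x 0 • E0) := key E0 (x 0) _
    _ = u 0 := by rw [show x - x 2 • E2 - x 1 • E1 - x 0 • E0 = 0 by rw [← h0]; abel]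

/-- For `p = 10/3`: if there is a nonzero `u ∈ H¹(ℝ³)` in the Nehari-type set with
`∫u² = r`, then `5/(3λK) ≤ r^(2/3)`, where `K` is the Gagliardo–Nirenberg constant at
`p = 10/3`. -/
theorem stmt7 (q lam r K : ℝ) (hq : 0 < q) (hlam : 0 < lam) (hr : 0 < r) (hK : 0 < K)
    (hGN : ∀ v : E3 → ℝ, H1 v →
      pInt (10 / 3) v ≤ K * gradInt v * (massInt v) ^ ((2 : ℝ) / 3))
    (u : E3 → ℝ) (hu : H1 u) (hne : u ≠ 0) (hmass : massInt u = r)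
    (hNehari : gradInt u + (q / 4) * phiInt u
        - (3 * ((10 : ℝ) / 3 - 2) / (2 * (10 / 3))) * lam * pInt (10 / 3) u = 0) :
    5 / (3 * lam * K) ≤ r ^ ((2 : ℝ) / 3) := by
  have hφnn : 0 ≤ phiInt u :=
    integral_nonneg fun x => mul_nonneg
      (integral_nonneg fun y => div_nonneg (sq_nonneg _) (norm_nonneg _)) (sq_nonneg _)
  have hgradnn : 0 ≤ gradInt u := integral_nonneg fun x => sq_nonneg _
  by_cases hgrad : gradInt u = 0
  · exfalso
    have hsq : Integrable (fun x => ‖fderiv ℝ u x‖ ^ 2) volume := hu.2.2.integrable_sq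
    have h0 : (fun x => ‖fderiv ℝ u x‖ ^ 2) =ᵐ[volume] 0 :=
      (integral_eq_zero_iff_of_nonneg (fun x => sq_nonneg _) hsq).mp hgrad
    have hfd : ∀ᵐ x : E3, fderiv ℝ u x = 0 := by
      filter_upwards [h0] with x hx
      have : ‖fderiv ℝ u x‖ = 0 := by
        have := hx
        simp only [Pi.zero_apply] at this
        nlinarith [norm_nonneg (fderiv ℝ u x)]
      simpa using this
    have hconst := const_of_ae_fderiv_zero u hu.2.1 hfd
    have hm : massInt u = ∫ _x : E3, (u 0) ^ 2 := by
      unfold massInt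
      exact integral_congr_ae (ae_of_all _ fun x => by show u x ^ 2 = u 0 ^ 2; rw [hconst x])
    rw [integral_const] at hm
    have htop : (volume : Measure E3) Set.univ = ⊤ :=
      measure_univ_of_isAddLeftInvariant _
    rw [measureReal_def, htop] at hm
    simp at hm
    rw [hm] at hmass
    linarith
  · have hgradpos : 0 < gradInt u := lt_of_le_of_ne hgradnn (Ne.symm hgrad)
    have hGNu := hGN u hu
    rw [hmass] at hGNu
    have hr23 : 0 < r ^ ((2 : ℝ) / 3) := Real.rpow_pos_of_pos hr _
    have hcoef : (3 * ((10 : ℝ) / 3 - 2) / (2 * (10 / 3))) = 3 / 5 := by norm_num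
    rw [hcoef] at hNehari
    have h1 : gradInt u ≤ 3 / 5 * lam * pInt (10 / 3) u := by
      nlinarith [mul_nonneg (le_of_lt hq) hφnn]
    have h2 : gradInt u ≤ 3 / 5 * lam * (K * gradInt u * r ^ ((2 : ℝ) / 3)) := by
      calc gradInt u ≤ 3 / 5 * lam * pInt (10 / 3) u := h1
        _ ≤ 3 / 5 * lam * (K * gradInt u * r ^ ((2 : ℝ) / 3)) := by
            apply mul_le_mul_of_nonneg_left hGNu
            positivity
    have h3 : 1 ≤ 3 / 5 * lam * K * r ^ ((2 : ℝ) / 3) := by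
      nlinarith
    rw [div_le_iff₀ (by positivity)]
    nlinarith
end
end

section
/- For p ∈ (10/3, 6), r, λ > 0, any u ∈ H¹(ℝ³) with ∫u² = r and ∫|∇u|² + (q/4)∫φ_u u² − (3(p−2)/(2p)) λ ∫|u|^p = 0 and u ≠ 0 satisfies ∫|∇u|² ≥ K^{4/(10−3p)} (3(p−2)λ/(2p))^{4/(10−3p)} r^{(6−p)/(10−3p)}, where K is the Gagliardo–Nirenberg constant for exponent p. (Note 10−3p < 0, so the exponents reverse the inequality direction compared to p < 10/3.) -/
open MeasureTheory

noncomputable section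

lemma my_abs_arctan_le_abs (t : ℝ) : |Real.arctan t| ≤ |t| := by
  have key : ∀ s : ℝ, 0 ≤ s → Real.arctan s ≤ s := by
    intro s hs
    have h0 : 0 ≤ Real.arctan s := by
      rw [← Real.arctan_zero]; exact Real.arctan_strictMono.monotone hs
    calc Real.arctan s ≤ Real.tan (Real.arctan s) :=
          Real.le_tan h0 (Real.arctan_lt_pi_div_two s)
      _ = s := Real.tan_arctan s
  rcases le_or_gt 0 t with h | h
  · have h0 : 0 ≤ Real.arctan t := by
      rw [← Real.arctan_zero]; exact Real.arctan_strictMono.monotone h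
    rw [abs_of_nonneg h0, abs_of_nonneg h]; exact key t h
  · have h0 : Real.arctan t ≤ 0 := by
      rw [← Real.arctan_zero]; exact Real.arctan_strictMono.monotone h.le
    rw [abs_of_nonpos h0, abs_of_neg h, ← Real.arctan_neg]
    exact key (-t) (by linarith)

lemma my_grad_pos (p K : ℝ) (hp2' : 2 < p) (hK : 0 < K)
    (hGN : ∀ v : E3 → ℝ, H1 v →
      pInt p v ≤ K * (gradInt v) ^ (3 * (p - 2) / 4) * (massInt v) ^ ((6 - p) / 4))
    (u : E3 → ℝ) (hu : H1 u) (hmass : 0 < massInt u) : 0 < gradInt u := by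
  obtain ⟨hu2, hud, hugrad⟩ := hu
  rcases lt_or_ge 0 (gradInt u) with h | h
  · exact h
  exfalso
  set v : E3 → ℝ := fun x => Real.arctan (u x) with hv
  have hvd : ∀ x, HasFDerivAt v ((1 / (1 + u x ^ 2)) • fderiv ℝ u x) x := fun x =>
    (Real.hasDerivAt_arctan (u x)).comp_hasFDerivAt x (hud x).hasFDerivAt
  have hfd : ∀ x, fderiv ℝ v x = (1 / (1 + u x ^ 2)) • fderiv ℝ u x := fun x => (hvd x).fderiv
  have hnorm : ∀ x, ‖fderiv ℝ v x‖ ≤ ‖fderiv ℝ u x‖ := by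
    intro x
    rw [hfd x, norm_smul]
    have h1 : (0:ℝ) < 1 + u x ^ 2 := by positivity
    have : ‖(1 / (1 + u x ^ 2) : ℝ)‖ ≤ 1 := by
      rw [Real.norm_eq_abs, abs_of_pos (by positivity)]
      rw [div_le_one h1]; nlinarith [sq_nonneg (u x)]
    calc ‖(1 / (1 + u x ^ 2) : ℝ)‖ * ‖fderiv ℝ u x‖ ≤ 1 * ‖fderiv ℝ u x‖ :=
          mul_le_mul_of_nonneg_right this (norm_nonneg _)
      _ = ‖fderiv ℝ u x‖ := one_mul _
  have hvcont : Continuous v := Real.continuous_arctan.comp hud.continuous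
  have hH1v : H1 v := by
    refine ⟨?_, fun x => (hvd x).differentiableAt, ?_⟩
    · refine hu2.of_le hvcont.aestronglyMeasurable (Filter.Eventually.of_forall fun x => ?_)
      simp only [Real.norm_eq_abs]
      exact my_abs_arctan_le_abs (u x)
    · refine hugrad.of_le ?_ (Filter.Eventually.of_forall fun x => ?_)
      · have : Measurable fun x => ‖fderiv ℝ v x‖ := by
          have h1 : (fun x => fderiv ℝ v x) = fun x => (1 / (1 + u x ^ 2)) • fderiv ℝ u x :=
            funext hfd
          rw [show (fun x => ‖fderiv ℝ v x‖) = fun x => ‖(1 / (1 + u x ^ 2)) • fderiv ℝ u x‖ by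
            simp only [hfd]]
          exact (((continuous_const.div
            (continuous_const.add ((hud.continuous).pow 2)) (fun x => (by positivity : (1:ℝ) + u x ^ 2 ≠ 0))).measurable).smul
            (measurable_fderiv ℝ u)).norm
        exact this.aestronglyMeasurable
      · simp only [Real.norm_eq_abs, abs_norm]
        exact hnorm x
  have hgradv0 : gradInt v = 0 := by
    have hle : gradInt v ≤ gradInt u := by
      refine integral_mono_of_nonneg (Filter.Eventually.of_forall fun x => by positivity)
        hugrad.integrable_sq (Filter.Eventually.of_forall fun x => ?_)
      exact pow_le_pow_left₀ (norm_nonneg _) (hnorm x) 2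
    have hge : 0 ≤ gradInt v := integral_nonneg fun x => by positivity
    linarith
  have hGNv := hGN v hH1v
  rw [hgradv0] at hGNv
  have hexp : 3 * (p - 2) / 4 ≠ 0 := ne_of_gt (by linarith)
  rw [Real.zero_rpow hexp, mul_zero, zero_mul] at hGNv
  -- now pInt p v ≤ 0, but pInt p v > 0
  have hne0 : 0 < volume (Function.support u) := by
    by_contra hzz
    push_neg at hzz
    have hz : volume (Function.support u) = 0 := le_antisymm hzz zero_le
    have hae : ∀ᵐ x, u x = 0 := by
      have hseteq : {x : E3 | ¬ u x = 0} = Function.support u := by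
        ext x; simp [Function.support]
      rw [ae_iff, hseteq]
      exact hz
    have : massInt u = 0 := by
      unfold massInt
      rw [integral_congr_ae ((hae.mono fun x hx => by simp [hx]) :
        (fun x => (u x)^2) =ᵐ[volume] (fun _ => (0:ℝ)))]
      simp
    linarith
  have hintf : Integrable (fun x => |v x| ^ p) volume := by
    have hb : ∀ x, |v x| ^ p ≤ (Real.pi / 2) ^ (p - 2) * (u x) ^ 2 := by
      intro x
      have hpi : |v x| ≤ Real.pi / 2 := by
        rw [abs_le]
        exact ⟨(Real.neg_pi_div_two_lt_arctan (u x)).le, (Real.arctan_lt_pi_div_two (u x)).le⟩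
      have habs : |v x| ≤ |u x| := my_abs_arctan_le_abs (u x)
      rcases eq_or_lt_of_le (abs_nonneg (v x)) with h0 | h0
      · rw [← h0, Real.zero_rpow (by positivity)]
        positivity
      · have : |v x| ^ p = |v x| ^ (p - 2) * |v x| ^ (2:ℝ) := by
          rw [← Real.rpow_add h0]; ring_nf
        rw [this]
        have h1 : |v x| ^ (p - 2) ≤ (Real.pi / 2) ^ (p - 2) :=
          Real.rpow_le_rpow (abs_nonneg _) hpi (by linarith)
        have h2 : |v x| ^ (2:ℝ) ≤ (u x) ^ 2 := by
          rw [Real.rpow_two]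
          calc |v x| ^ 2 ≤ |u x| ^ 2 := pow_le_pow_left₀ (abs_nonneg _) habs 2
            _ = (u x) ^ 2 := sq_abs _
        exact mul_le_mul h1 h2 (by positivity) (by positivity)
    refine Integrable.mono' (hu2.integrable_sq.const_mul ((Real.pi / 2) ^ (p - 2)))
      ((hvcont.abs.rpow_const (fun x => Or.inr (by positivity))).aestronglyMeasurable)
      (Filter.Eventually.of_forall fun x => ?_)
    rw [Real.norm_eq_abs, abs_of_nonneg (by positivity)]
    exact hb x
  have hpos : 0 < pInt p v := by
    unfold pInt
    rw [integral_pos_iff_support_of_nonneg (fun x => by positivity) hintf]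
    have : Function.support (fun x => |v x| ^ p) = Function.support u := by
      ext x
      simp only [Function.support, Set.mem_setOf_eq]
      constructor
      · intro hx hz
        apply hx
        simp only [hv, hz, Real.arctan_zero, abs_zero]
        exact Real.zero_rpow (by linarith)
      · intro hx hz
        apply hx
        have hv0 : |v x| = 0 :=
          (Real.rpow_eq_zero (abs_nonneg _) (by linarith : p ≠ 0)).mp hz
        simpa [hv, Real.arctan_eq_zero_iff] using abs_eq_zero.mp hv0
    rw [this]
    exact hne0
  linarith

/-- For `p ∈ (10/3, 6)`, any nonzero `u ∈ H¹(ℝ³)` in the Nehari-type set with `∫u² = r`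
satisfies `∫|∇u|² ≥ K^(4/(10-3p)) (3(p-2)λ/(2p))^(4/(10-3p)) r^((6-p)/(10-3p))`. -/
theorem stmt8 (q lam r p K : ℝ) (hq : 0 < q) (hlam : 0 < lam) (hr : 0 < r)
    (hp1 : 10 / 3 < p) (hp2 : p < 6) (hK : 0 < K)
    (hGN : ∀ v : E3 → ℝ, H1 v →
      pInt p v ≤ K * (gradInt v) ^ (3 * (p - 2) / 4) * (massInt v) ^ ((6 - p) / 4))
    (u : E3 → ℝ) (hu : H1 u) (hne : u ≠ 0) (hmass : massInt u = r)
    (hNehari : gradInt u + (q / 4) * phiInt u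
        - (3 * (p - 2) / (2 * p)) * lam * pInt p u = 0) :
    gradInt u ≥ K ^ (4 / (10 - 3 * p)) * (3 * (p - 2) * lam / (2 * p)) ^ (4 / (10 - 3 * p))
      * r ^ ((6 - p) / (10 - 3 * p)) := by
  have hp2' : (2:ℝ) < p := by linarith
  have hp0 : (0:ℝ) < p := by linarith
  have h10 : 10 - 3 * p < 0 := by linarith
  have h10' : 10 - 3 * p ≠ 0 := ne_of_lt h10
  have hG0 : 0 < gradInt u := my_grad_pos p K hp2' hK hGN u hu (by rw [hmass]; exact hr)
  set G := gradInt u with hG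
  set α := 3 * (p - 2) / 4 with hα
  set a := 4 / (10 - 3 * p) with ha
  have hαpos : 0 < α := by rw [hα]; apply div_pos (by linarith) (by norm_num)
  have ha_neg : a < 0 := div_neg_of_pos_of_neg (by norm_num) h10
  have hc : 0 < 3 * (p - 2) / (2 * p) * lam :=
    mul_pos (div_pos (by linarith) (by linarith)) hlam
  have hPhi : 0 ≤ phiInt u :=
    integral_nonneg fun x => mul_nonneg (integral_nonneg fun y => by positivity) (by positivity)
  have hGNu := hGN u hu
  rw [hmass] at hGNu
  set C := 3 * (p - 2) / (2 * p) * lam * K * r ^ ((6 - p) / 4) with hC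
  have hCpos : 0 < C := by
    rw [hC]
    have := Real.rpow_pos_of_pos hr ((6 - p) / 4)
    positivity
  have hkey : G ≤ C * G ^ α := by
    have hstep : G ≤ 3 * (p - 2) / (2 * p) * lam * pInt p u := by
      nlinarith [mul_nonneg (le_of_lt hq) hPhi]
    calc G ≤ 3 * (p - 2) / (2 * p) * lam * pInt p u := hstep
      _ ≤ 3 * (p - 2) / (2 * p) * lam * (K * G ^ α * r ^ ((6 - p) / 4)) :=
          mul_le_mul_of_nonneg_left hGNu hc.le
      _ = C * G ^ α := by rw [hC]; ring
  have hGα : 0 < G ^ α := Real.rpow_pos_of_pos hG0 α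
  have hstep2 : G ^ (1 - α) ≤ C := by
    have hsplit : G ^ (1 - α) * G ^ α = G := by
      rw [← Real.rpow_add hG0, sub_add_cancel, Real.rpow_one]
    have : G ^ (1 - α) * G ^ α ≤ C * G ^ α := by rw [hsplit]; exact hkey
    exact le_of_mul_le_mul_right this hGα
  have hpow : C ^ a ≤ (G ^ (1 - α)) ^ a :=
    Real.rpow_le_rpow_of_nonpos (Real.rpow_pos_of_pos hG0 _) hstep2 ha_neg.le
  have hmul1 : (1 - α) * a = 1 := by
    rw [hα, ha]
    field_simp
    ring
  have hGa : (G ^ (1 - α)) ^ a = G := by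
    rw [← Real.rpow_mul hG0.le, hmul1, Real.rpow_one]
  have hmain : C ^ a ≤ G := hGa ▸ hpow
  have hCa : C ^ a = K ^ a * (3 * (p - 2) * lam / (2 * p)) ^ a * r ^ ((6 - p) / (10 - 3 * p)) := by
    have hr6 : (0:ℝ) ≤ r ^ ((6 - p) / 4) := (Real.rpow_pos_of_pos hr _).le
    have hcl : (0:ℝ) ≤ 3 * (p - 2) / (2 * p) * lam := hc.le
    rw [hC, Real.mul_rpow (by positivity) hr6, Real.mul_rpow hcl hK.le,
      ← Real.rpow_mul hr.le]
    have hba : (6 - p) / 4 * a = (6 - p) / (10 - 3 * p) := by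
      rw [ha]; field_simp
    have hbase : 3 * (p - 2) / (2 * p) * lam = 3 * (p - 2) * lam / (2 * p) := by ring
    rw [hba, hbase]
    ring
  rw [ge_iff_le, ← hCa]
  exact hmain

end
end

section
/- Let p ∈ (8/3, 10/3), p ≠ 3, q, λ > 0 and u with A = ∫|∇u|² > 0, C = λ∫|u|^p > 0. Then the system φ'_{r,u}(s) = 0, φ''_{r,u}(s) = 0 in the unknowns s, r > 0 has the unique solution s(u) = ((4p/(3(p−2)(3p−8))) r^{−(p−2)/2} A/C)^{2/(3p−10)} evaluated at r = r(u), where r(u) = (4(10−3p)/(3p−8))^{(3p−10)/(4(p−3))} (4p/(3(p−2)(3p−8)))^{1/(2(p−3))} R_p(u), and R_p(u) = (∫|∇u|²)^{(3p−8)/(4(p−3))}(q∫φ_u u²)^{(10−3p)/(4(p−3))}/(λ∫|u|^p)^{1/(2(p−3))}. -/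
open Real

set_option maxHeartbeats 1000000


/-- For `p ∈ (8/3, 10/3)`, `p ≠ 3`, the system `φ'_{r,u}(s) = φ''_{r,u}(s) = 0`
(with `A = ∫|∇u|²`, `B = q∫φ_u u²`, `C = λ∫|u|^p`) has a unique positive solution
`(s(u), r(u))`, with `r(u)` given in terms of the nonlinear Rayleigh quotient
`R_p(u) = A^((3p-8)/(4(p-3))) B^((10-3p)/(4(p-3))) / C^(1/(2(p-3)))` and `s(u)` given
by the explicit formula evaluated at `r = r(u)`. -/
theorem stmt15 (p A B C : ℝ) (hp1 : 8 / 3 < p) (hp2 : p < 10 / 3) (hp3 : p ≠ 3)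
    (hA : 0 < A) (hB : 0 < B) (hC : 0 < C) :
    ∃ s r : ℝ, 0 < s ∧ 0 < r ∧
      r * s * A + r ^ 2 / 4 * B
        - 3 * (p - 2) / (2 * p) * r ^ (p / 2) * s ^ (3 * p / 2 - 4) * C = 0 ∧
      r * A - 3 * (p - 2) * (3 * p - 8) / (4 * p) * r ^ (p / 2) * s ^ (3 * p / 2 - 5) * C = 0 ∧
      r = (4 * (10 - 3 * p) / (3 * p - 8)) ^ ((3 * p - 10) / (4 * (p - 3)))
          * (4 * p / (3 * (p - 2) * (3 * p - 8))) ^ (1 / (2 * (p - 3)))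
          * (A ^ ((3 * p - 8) / (4 * (p - 3))) * B ^ ((10 - 3 * p) / (4 * (p - 3)))
              / C ^ (1 / (2 * (p - 3)))) ∧
      s = (4 * p / (3 * (p - 2) * (3 * p - 8)) * r ^ (-((p - 2) / 2)) * (A / C))
            ^ (2 / (3 * p - 10)) ∧
      ∀ s' r' : ℝ, 0 < s' → 0 < r' →
        r' * s' * A + r' ^ 2 / 4 * B
          - 3 * (p - 2) / (2 * p) * r' ^ (p / 2) * s' ^ (3 * p / 2 - 4) * C = 0 →
        r' * A - 3 * (p - 2) * (3 * p - 8) / (4 * p) * r' ^ (p / 2) * s' ^ (3 * p / 2 - 5) * C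
            = 0 →
        s' = s ∧ r' = r := by
  have logeq : ∀ x y : ℝ, 0 < x → 0 < y → Real.log x = Real.log y → x = y := by
    intro x y hx hy h
    rw [← Real.exp_log hx, ← Real.exp_log hy, h]
  have hp0 : 0 < p := by linarith
  have hpm2 : 0 < p - 2 := by linarith
  have hp8 : 0 < 3 * p - 8 := by linarith
  have hp10 : 0 < 10 - 3 * p := by linarith
  have hp3' : p - 3 ≠ 0 := sub_ne_zero.mpr hp3
  have h3p10 : 3 * p - 10 ≠ 0 := by intro h; nlinarith [hp10]
  set X : ℝ := 4 * (10 - 3 * p) / (3 * p - 8) with hXdef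
  have hX : 0 < X := by positivity
  set Y : ℝ := 4 * p / (3 * (p - 2) * (3 * p - 8)) with hYdef
  have hY : 0 < Y := by positivity
  set c : ℝ := (3 * p - 8) * B / (4 * (10 - 3 * p) * A) with hcdef
  have hc : 0 < c := by positivity
  set D : ℝ := Y * X ^ ((3 * p - 10) / 2) * A ^ ((3 * p - 8) / 2) * B ^ ((10 - 3 * p) / 2) / C
    with hDdef
  have hD : 0 < D := by positivity
  set r : ℝ := D ^ (1 / (2 * (p - 3))) with hrdef
  have hr : 0 < r := by positivity
  set s : ℝ := c * r with hsdef
  have hs : 0 < s := by positivity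
  -- r ^ (2(p-3)) = D
  have hrD : r ^ (2 * (p - 3)) = D := by
    rw [hrdef, ← Real.rpow_mul hD.le,
      show 1 / (2 * (p - 3)) * (2 * (p - 3)) = 1 by field_simp, Real.rpow_one]
  -- key identity I3 : c ^ ((3p-10)/2) * D = Y * A / C
  have hI3 : c ^ ((3 * p - 10) / 2) * D = Y * A / C := by
    apply logeq _ _ (by positivity) (by positivity)
    rw [hDdef, hcdef, hXdef]
    simp (disch := positivity) only [Real.log_mul, Real.log_div, Real.log_rpow]
    ring
  -- s ^ ((3p-10)/2) = Y * r ^ (-((p-2)/2)) * (A/C)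
  have hspow : s ^ ((3 * p - 10) / 2) = Y * r ^ (-((p - 2) / 2)) * (A / C) := by
    have h1 : s ^ ((3 * p - 10) / 2) = c ^ ((3 * p - 10) / 2) * r ^ ((3 * p - 10) / 2) := by
      rw [hsdef, Real.mul_rpow hc.le hr.le]
    have h2 : r ^ ((3 * p - 10) / 2)
        = r ^ (2 * (p - 3)) * r ^ (-((p - 2) / 2)) := by
      rw [← Real.rpow_add hr, show 2 * (p - 3) + -((p - 2) / 2) = (3 * p - 10) / 2 by ring]
    rw [h1, h2, hrD]
    calc c ^ ((3 * p - 10) / 2) * (D * r ^ (-((p - 2) / 2)))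
        = (c ^ ((3 * p - 10) / 2) * D) * r ^ (-((p - 2) / 2)) := by ring
      _ = Y * A / C * r ^ (-((p - 2) / 2)) := by rw [hI3]
      _ = Y * r ^ (-((p - 2) / 2)) * (A / C) := by ring
  -- the stated s-formula
  have hsformula : s = (Y * r ^ (-((p - 2) / 2)) * (A / C)) ^ (2 / (3 * p - 10)) := by
    rw [← hspow, ← Real.rpow_mul hs.le,
      show (3 * p - 10) / 2 * (2 / (3 * p - 10)) = 1 by field_simp, Real.rpow_one]
  -- stated r-formula
  have hrformula : r = X ^ ((3 * p - 10) / (4 * (p - 3)))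
      * Y ^ (1 / (2 * (p - 3)))
      * (A ^ ((3 * p - 8) / (4 * (p - 3))) * B ^ ((10 - 3 * p) / (4 * (p - 3)))
          / C ^ (1 / (2 * (p - 3)))) := by
    apply logeq _ _ hr (by positivity)
    rw [hrdef, hDdef]
    simp (disch := positivity) only [Real.log_mul, Real.log_div, Real.log_rpow]
    field_simp
    ring
  -- key product identity used for both equations
  have hkey : r ^ (p / 2) * s ^ ((3 * p - 10) / 2) * C = Y * r * A := by
    rw [hspow]
    have : r ^ (p / 2) * (Y * r ^ (-((p - 2) / 2)) * (A / C)) * C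
        = Y * (r ^ (p / 2) * r ^ (-((p - 2) / 2))) * (A / C * C) := by ring
    rw [this, ← Real.rpow_add hr, show p / 2 + -((p - 2) / 2) = 1 by ring, Real.rpow_one,
      div_mul_cancel₀ _ hC.ne']
  refine ⟨s, r, hs, hr, ?_, ?_, hrformula, hsformula, ?_⟩
  · -- first equation
    rw [show 3 * p / 2 - 4 = (3 * p - 10) / 2 + 1 by ring, Real.rpow_add hs, Real.rpow_one]
    have h1 : 3 * (p - 2) / (2 * p) * r ^ (p / 2) * (s ^ ((3 * p - 10) / 2) * s) * C
        = 3 * (p - 2) / (2 * p) * (r ^ (p / 2) * s ^ ((3 * p - 10) / 2) * C) * s := by ring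
    rw [h1, hkey, hsdef, hcdef, hYdef]
    field_simp
    ring
  · -- second equation
    rw [show 3 * p / 2 - 5 = (3 * p - 10) / 2 by ring]
    have h1 : 3 * (p - 2) * (3 * p - 8) / (4 * p) * r ^ (p / 2) * s ^ ((3 * p - 10) / 2) * C
        = 3 * (p - 2) * (3 * p - 8) / (4 * p) * (r ^ (p / 2) * s ^ ((3 * p - 10) / 2) * C) := by
      ring
    rw [h1, hkey, hYdef]
    field_simp
    ring
  · -- uniqueness
    intro s' r' hs' hr' h1 h2
    rw [show 3 * p / 2 - 5 = (3 * p - 10) / 2 by ring] at h2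
    rw [show 3 * p / 2 - 4 = (3 * p - 10) / 2 + 1 by ring, Real.rpow_add hs',
      Real.rpow_one] at h1
    -- from h2 : product form
    have h2' : 3 * (p - 2) * (3 * p - 8) * (r' ^ (p / 2) * s' ^ ((3 * p - 10) / 2) * C)
        = 4 * p * (r' * A) := by
      have h2a : 3 * (p - 2) * (3 * p - 8) / (4 * p)
          * (r' ^ (p / 2) * s' ^ ((3 * p - 10) / 2) * C) = r' * A := by
        linear_combination -h2
      field_simp at h2a
      linarith [h2a]
    -- substitute in h1 to get s' = c * r'
    have hscr : s' = c * r' := by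
      have e1 : 3 * (p - 2) / (2 * p) * r' ^ (p / 2) * (s' ^ ((3 * p - 10) / 2) * s') * C
          = (3 * (p - 2) * (3 * p - 8) * (r' ^ (p / 2) * s' ^ ((3 * p - 10) / 2) * C))
            * s' / (2 * p * (3 * p - 8)) := by
        field_simp
      rw [e1, h2'] at h1
      rw [hcdef]
      have hr'ne := hr'.ne'
      have e3 : 4 * p * (r' * A) * s' / (2 * p * (3 * p - 8)) * (3 * p - 8) = 2 * r' * A * s' := by
        rw [div_mul_eq_mul_div, div_eq_iff (mul_pos (mul_pos two_pos hp0) hp8).ne']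
        ring
      have hgoal : r' * (s' * (4 * (10 - 3 * p) * A))
          = r' * ((3 * p - 8) * B * r') := by linear_combination -4 * (3 * p - 8) * h1 - 4 * e3
      have hcan := mul_left_cancel₀ hr'ne hgoal
      rw [div_mul_eq_mul_div, eq_div_iff (by positivity)]
      linear_combination hcan
    -- now r' ^ (2(p-3)) = D
    have hr'D : r' ^ (2 * (p - 3)) = D := by
      have e2 : r' ^ (p / 2) * s' ^ ((3 * p - 10) / 2) * C
          = c ^ ((3 * p - 10) / 2) * (r' ^ (2 * (p - 3)) * r') * C := by
        have hre : r' ^ (p / 2) * r' ^ ((3 * p - 10) / 2) = r' ^ (2 * (p - 3)) * r' := by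
          rw [← Real.rpow_add hr', show p / 2 + (3 * p - 10) / 2 = 2 * (p - 3) + 1 by ring,
            Real.rpow_add hr', Real.rpow_one]
        rw [hscr, Real.mul_rpow hc.le hr'.le]
        linear_combination (c ^ ((3 * p - 10) / 2) * C) * hre
      rw [e2] at h2'
      -- also D satisfies: 3(p-2)(3p-8) * (c^e * D * C) = 4p * A  since c^e*D = Y*A/C
      have hDside : 3 * (p - 2) * (3 * p - 8) * (c ^ ((3 * p - 10) / 2) * (D * r') * C)
          = 4 * p * (r' * A) := by
        have : c ^ ((3 * p - 10) / 2) * (D * r') * C = (Y * A / C) * r' * C := by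
          rw [← hI3]; ring
        rw [this, hYdef]
        field_simp
      have hcan : c ^ ((3 * p - 10) / 2) * (r' ^ (2 * (p - 3)) * r') * C
          = c ^ ((3 * p - 10) / 2) * (D * r') * C := by
        have h4p : (0:ℝ) < 3 * (p - 2) * (3 * p - 8) := by positivity
        apply mul_left_cancel₀ h4p.ne'
        rw [h2', hDside]
      have hcpos : (0:ℝ) < c ^ ((3 * p - 10) / 2) := by positivity
      have := mul_right_cancel₀ hC.ne' hcan
      have := mul_left_cancel₀ hcpos.ne' this
      exact mul_right_cancel₀ hr'.ne' this
    have hr'r : r' = r := by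
      rw [hrdef, ← hr'D, ← Real.rpow_mul hr'.le,
        show 2 * (p - 3) * (1 / (2 * (p - 3))) = 1 by field_simp, Real.rpow_one]
    exact ⟨by rw [hscr, hr'r, hsdef], hr'r⟩
end

section
/- Let p ∈ (3, 10/3) and suppose A = ∫|∇u|², B = q∫φ_u u², C = λ∫|u|^p are positive, r > 0, t > 0 satisfy rtA + (r²/4)B − (3(p−2)/(2p)) r^{p/2} t^{3p/2−4} C = 0 and rA − (3(p−2)(3p−8)/(4p)) r^{p/2} t^{3p/2−5} C > 0. Then tA + (r/2)B − (3(p−2)/4) t^{3p/2−4} r^{p/2−1} C < 0. -/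
/-- Lemma "I1": for `p ∈ (3, 10/3)`, if `A, B, C > 0` and `r, t > 0` satisfy the Nehari
constraint and the second-order condition, then
`tA + (r/2)B − (3(p−2)/4) t^(3p/2−4) r^(p/2−1) C < 0`. -/
theorem stmt16 (p A B C r t : ℝ) (hp1 : 3 < p) (hp2 : p < 10 / 3)
    (hA : 0 < A) (hB : 0 < B) (hC : 0 < C) (hr : 0 < r) (ht : 0 < t)
    (h1 : r * t * A + r ^ 2 / 4 * B
        - 3 * (p - 2) / (2 * p) * r ^ (p / 2) * t ^ (3 * p / 2 - 4) * C = 0)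
    (h2 : 0 < r * A - 3 * (p - 2) * (3 * p - 8) / (4 * p) * r ^ (p / 2) * t ^ (3 * p / 2 - 5) * C) :
    t * A + r / 2 * B - 3 * (p - 2) / 4 * t ^ (3 * p / 2 - 4) * r ^ (p / 2 - 1) * C < 0 := by
  have hp0 : (0:ℝ) < p := by linarith
  have hx : (0:ℝ) < t ^ (3*p/2-5) := Real.rpow_pos_of_pos ht _
  have hy : (0:ℝ) < r ^ (p/2-1) := Real.rpow_pos_of_pos hr _
  have h3 : t ^ (3*p/2-4) = t * t ^ (3*p/2-5) := by
    rw [show 3*p/2-4 = 1 + (3*p/2-5) by ring, Real.rpow_add ht, Real.rpow_one]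
  have h4 : r ^ (p/2) = r * r ^ (p/2-1) := by
    nth_rewrite 1 [show p/2 = 1 + (p/2-1) by ring]
    rw [Real.rpow_add hr, Real.rpow_one]
  set x := t ^ (3*p/2-5) with hxdef
  set y := r ^ (p/2-1) with hydef
  rw [h3, h4] at h1
  rw [h4] at h2
  rw [h3]
  field_simp at h1 h2
  have h2t : 3 * (p - 2) * (3 * p - 8) * (r * y) * x * C * t < r * A * (4 * p) * t :=
    by have h2m := mul_lt_mul_of_pos_right h2 ht; linarith
  have hpk : 0 < (p - 2) * ((p - 3) * (r * t * x * y * C)) := by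
    have h23 : (0:ℝ) < p - 3 := by linarith
    have h22 : (0:ℝ) < p - 2 := by linarith
    positivity
  have key : 4 * p * (r * (t * A + r / 2 * B - 3 * (p - 2) / 4 * (t * x) * y * C)) < 0 := by
    linarith [h1, h2t, hpk]
  have h4pr : (0:ℝ) < 4 * p * r := by positivity
  by_contra hG
  push_neg at hG
  have hrG : 0 ≤ r * (t * A + r / 2 * B - 3 * (p - 2) / 4 * (t * x) * y * C) :=
    mul_nonneg hr.le hG
  have : 0 ≤ 4 * p * (r * (t * A + r / 2 * B - 3 * (p - 2) / 4 * (t * x) * y * C)) :=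
    mul_nonneg (by positivity) hrG
  linarith
end

section
/- Let p ∈ (3, 10/3) and A, B, C > 0, r > 0, t > 0 satisfy rtA + (r²/4)B − (3(p−2)/(2p)) r^{p/2} t^{3p/2−4} C = 0 and rA − (3(p−2)(3p−8)/(4p)) r^{p/2} t^{3p/2−5} C > 0. Then t²A + rtB − r^{p/2−1} t^{3p/2−3} C < ((−27p² + 146p − 192)/(4p)) r^{p/2−1} t^{3p/2−3} C. In particular, if p ≥ (73+√145)/27 then t²A + rtB − r^{p/2−1} t^{3p/2−3} C < 0. -/
set_option maxHeartbeats 800000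


/-- Lemma "I2" (algebraic core): for `p ∈ (3, 10/3)`, under the Nehari constraint and the
second-order condition, `t²A + rtB − r^(p/2−1) t^(3p/2−3) C` is bounded above by
`((−27p² + 146p − 192)/(4p)) r^(p/2−1) t^(3p/2−3) C`; in particular it is negative when
`p ≥ (73 + √145)/27`. -/
theorem stmt18 (p A B C r t : ℝ) (hp1 : 3 < p) (hp2 : p < 10 / 3)
    (hA : 0 < A) (hB : 0 < B) (hC : 0 < C) (hr : 0 < r) (ht : 0 < t)
    (h1 : r * t * A + r ^ 2 / 4 * B
        - 3 * (p - 2) / (2 * p) * r ^ (p / 2) * t ^ (3 * p / 2 - 4) * C = 0)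
    (h2 : 0 < r * A - 3 * (p - 2) * (3 * p - 8) / (4 * p) * r ^ (p / 2) * t ^ (3 * p / 2 - 5) * C) :
    t ^ 2 * A + r * t * B - r ^ (p / 2 - 1) * t ^ (3 * p / 2 - 3) * C <
      (-27 * p ^ 2 + 146 * p - 192) / (4 * p) * r ^ (p / 2 - 1) * t ^ (3 * p / 2 - 3) * C ∧
    ((73 + Real.sqrt 145) / 27 ≤ p →
      t ^ 2 * A + r * t * B - r ^ (p / 2 - 1) * t ^ (3 * p / 2 - 3) * C < 0) := by
  have hp0 : (0:ℝ) < p := by linarith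
  have e1 : r ^ (p / 2 - 1) = r ^ (p / 2) / r := by
    rw [Real.rpow_sub hr, Real.rpow_one]
  have e2 : t ^ (3 * p / 2 - 3) = t ^ (3 * p / 2 - 4) * t := by
    rw [show 3 * p / 2 - 3 = (3 * p / 2 - 4) + 1 by ring, Real.rpow_add ht, Real.rpow_one]
  have e3 : t ^ (3 * p / 2 - 5) = t ^ (3 * p / 2 - 4) / t := by
    rw [show 3 * p / 2 - 5 = (3 * p / 2 - 4) - 1 by ring, Real.rpow_sub ht, Real.rpow_one]
  rw [e1, e2]
  rw [e3] at h2
  set s := r ^ (p / 2) with hsdef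
  set u := t ^ (3 * p / 2 - 4) with hudef
  have hs : 0 < s := Real.rpow_pos_of_pos hr _
  have hu : 0 < u := Real.rpow_pos_of_pos ht _
  clear_value s u
  have hrne : r ≠ 0 := hr.ne'
  have htne : t ≠ 0 := ht.ne'
  have hpne : p ≠ 0 := hp0.ne'
  have h1' : 4 * p * r * t ^ 2 * A + p * r ^ 2 * t * B - 6 * (p - 2) * s * u * t * C = 0 := by
    have h := congrArg (fun x : ℝ => 4 * p * t * x) h1
    simp only [mul_zero] at h
    field_simp at h
    nlinarith [h]
  have h2' : 0 < 4 * p * r * t * A - 3 * (p - 2) * (3 * p - 8) * s * u * C := by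
    have h : 0 < 4 * p * t *
        (r * A - 3 * (p - 2) * (3 * p - 8) / (4 * p) * s * (u / t) * C) := by positivity
    have h' : 4 * p * t *
        (r * A - 3 * (p - 2) * (3 * p - 8) / (4 * p) * s * (u / t) * C)
        = 4 * p * r * t * A - 3 * (p - 2) * (3 * p - 8) * s * u * C := by
      field_simp
    linarith [h'.symm ▸ h]
  have h2t : 0 < 12 * p * r * t ^ 2 * A - 9 * (p - 2) * (3 * p - 8) * s * u * t * C := by
    nlinarith [mul_pos (by positivity : (0:ℝ) < 3 * t) h2']
  have key : t ^ 2 * A + r * t * B - s / r * (u * t) * C <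
      (-27 * p ^ 2 + 146 * p - 192) / (4 * p) * (s / r) * (u * t) * C := by
    rw [← mul_lt_mul_iff_right₀ (show (0:ℝ) < 4 * p * r by positivity)]
    have eL : 4 * p * r * (t ^ 2 * A + r * t * B - s / r * (u * t) * C)
        = 4 * p * r * t ^ 2 * A + 4 * p * r ^ 2 * t * B - 4 * p * s * u * t * C := by
      field_simp
    have eR : 4 * p * r * ((-27 * p ^ 2 + 146 * p - 192) / (4 * p) * (s / r) * (u * t) * C)
        = (-27 * p ^ 2 + 146 * p - 192) * s * u * t * C := by
      field_simp
    rw [eL, eR]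
    linarith [h1', h2t]
  refine ⟨key, fun hle => ?_⟩
  have hs0 : (0:ℝ) ≤ Real.sqrt 145 := Real.sqrt_nonneg _
  have h145 : Real.sqrt 145 * Real.sqrt 145 = 145 := Real.mul_self_sqrt (by norm_num)
  have h73 : Real.sqrt 145 ≤ 27 * p - 73 := by linarith
  have hsq := mul_self_le_mul_self hs0 h73
  have hsq' : (145:ℝ) ≤ (27 * p - 73) * (27 * p - 73) := by rw [← h145]; exact hsq
  have hM : -27 * p ^ 2 + 146 * p - 192 ≤ 0 := by nlinarith [hsq']
  have hdiv : (-27 * p ^ 2 + 146 * p - 192) / (4 * p) ≤ 0 :=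
    div_nonpos_of_nonpos_of_nonneg hM (by positivity)
  have hRHS : (-27 * p ^ 2 + 146 * p - 192) / (4 * p) * (s / r) * (u * t) * C ≤ 0 := by
    have h' : (0:ℝ) ≤ s / r := by positivity
    have h'' : (0:ℝ) ≤ u * t := by positivity
    exact mul_nonpos_of_nonpos_of_nonneg
      (mul_nonpos_of_nonpos_of_nonneg (mul_nonpos_of_nonpos_of_nonneg hdiv h') h'') hC.le
  calc t ^ 2 * A + r * t * B - s / r * (u * t) * C
      < (-27 * p ^ 2 + 146 * p - 192) / (4 * p) * (s / r) * (u * t) * C := key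
    _ ≤ 0 := hRHS
end
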